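/- Boundedness of negative fractional powers of 1 − Δ_h on l^p_h with logarithmic loss: Let d ≥ 1, α ∈ [0,1], 1 ≤ p ≤ ∞, and 0 < h ≤ 1. Then there exists a constant C > 0, depending only on d, such that for every f ∈ l^p_h, ‖(1 − Δ_h)^{−α} f‖_{l^p_h} ≤ C (1 + |ln h|)^{dα} ‖f‖_{l^p_h}, where (1 − Δ_h)^{−α} is the Fourier multiplier operator with symbol M(ξ)^{−α}. -/

import Mathlib

noncomputable section

open scoped ENNReal Real
open MeasureTheory

/-- The integer lattice indexing `hℤ^d` (the point `k ∈ hℤ^d` corresponds to `h • k`). -/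
abbrev ZLat (d : ℕ) := Fin d → ℤ

/-- The fundamental domain `I_h = [0, 2π/h]^d` of the dual torus. -/
def fourierBox (d : ℕ) (h : ℝ) : Set (Fin d → ℝ) :=
  Set.univ.pi fun _ : Fin d => Set.Icc 0 (2 * π / h)

/-- The Fourier symbol `M(ξ) = 1 + 4h⁻² Σ_j sin²(hξ_j/2)` of the operator `1 − Δ_h`. -/
def Msymb (d : ℕ) (h : ℝ) (ξ : Fin d → ℝ) : ℝ :=
  1 + 4 / h ^ 2 * ∑ j : Fin d, Real.sin (h * ξ j / 2) ^ 2

/-- The kernel `K_k = (h/(2π))^d ∫_{I_h} m(ξ) e^{i (hk)·ξ} dξ` of the Fourier multiplier with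
symbol `m`; the lattice point `k : ZLat d` corresponds to `h k ∈ hℤ^d`. -/
def multKernel (d : ℕ) (h : ℝ) (m : (Fin d → ℝ) → ℂ) (k : ZLat d) : ℂ :=
  ((h / (2 * π)) ^ d : ℝ) *
    ∫ ξ in fourierBox d h,
      m ξ * Complex.exp (Complex.I * ((h * ∑ j : Fin d, (k j : ℝ) * ξ j : ℝ) : ℂ))

/-- The Fourier multiplier operator with symbol `m`, i.e. convolution with the kernel
`multKernel d h m`, so that the discrete Fourier transform of `multOp d h m f` is `m · f̂`. -/
def multOp (d : ℕ) (h : ℝ) (m : (Fin d → ℝ) → ℂ) (f : ZLat d → ℂ) : ZLat d → ℂ :=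
  fun n => ∑' k : ZLat d, f k * multKernel d h m (n - k)

open scoped ENNReal Real
open MeasureTheory

/-- Generalized binomial coefficients for `(1-x)^{-α}`. -/
def binCoef (α : ℝ) : ℕ → ℝ
  | 0 => 1
  | (m+1) => binCoef α m * ((α + m) / (m + 1))

lemma binCoef_nonneg {α : ℝ} (hα : 0 ≤ α) (m : ℕ) : 0 ≤ binCoef α m := by
  induction m with
  | zero => norm_num [binCoef]
  | succ m ih =>
    rw [binCoef]
    apply mul_nonneg ih
    apply div_nonneg (by positivity) (by positivity)

lemma binCoef_pos {α : ℝ} (hα : 0 < α) (m : ℕ) : 0 < binCoef α m := by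
  induction m with
  | zero => norm_num [binCoef]
  | succ m ih =>
    rw [binCoef]
    apply mul_pos ih
    apply div_pos (by positivity) (by positivity)

lemma binCoef_eq_gamma {α : ℝ} (hα : 0 < α) (m : ℕ) :
    binCoef α m = Real.Gamma (α + m) / (Real.Gamma α * m.factorial) := by
  induction m with
  | zero => simp [binCoef, div_self (ne_of_gt (Real.Gamma_pos_of_pos hα))]
  | succ m ih =>
    have hne : α + (m : ℝ) ≠ 0 := by positivity
    have hG : Real.Gamma (α + (m + 1 : ℕ)) = (α + m) * Real.Gamma (α + m) := by
      push_cast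
      rw [show α + ((m : ℝ) + 1) = (α + m) + 1 by ring, Real.Gamma_add_one hne]
    rw [binCoef, ih, hG]
    have h1 : ((m + 1 : ℕ) : ℝ) ≠ 0 := by positivity
    rw [Nat.factorial_succ]
    field_simp [Nat.factorial_succ]
    push_cast
    ring

lemma summable_binCoef {α : ℝ} (hα : 0 ≤ α) {x : ℝ} (hx0 : 0 ≤ x) (hx1 : x < 1) :
    Summable (fun m : ℕ => binCoef α m * x ^ m) := by
  rcases eq_or_lt_of_le hα with hα0 | hαpos
  · -- α = 0 : terms vanish for m ≥ 1
    have h0 : ∀ m : ℕ, m ≠ 0 → binCoef α m * x ^ m = 0 := by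
      intro m hm
      have : binCoef α m = 0 := by
        induction m with
        | zero => exact absurd rfl hm
        | succ m ih =>
          rcases Nat.eq_zero_or_pos m with rfl | hmpos
          · simp [binCoef, ← hα0]
          · rw [binCoef, ih hmpos.ne', zero_mul]
      rw [this, zero_mul]
    exact summable_of_ne_finset_zero (s := {0}) (by
      intro m hm
      exact h0 m (by simpa using hm))
  rcases eq_or_lt_of_le hx0 with hx0' | hxpos
  · refine summable_of_ne_finset_zero (s := {0}) ?_
    intro m hm
    simp only [Finset.mem_singleton] at hm
    rw [← hx0', zero_pow hm, mul_zero]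
  · apply summable_of_ratio_test_tendsto_lt_one hx1
    · filter_upwards with m
      exact (mul_pos (binCoef_pos hαpos m) (pow_pos hxpos m)).ne'
    · have : ∀ m : ℕ, ‖binCoef α (m+1) * x ^ (m+1)‖ / ‖binCoef α m * x ^ m‖
          = (α + m) / (m + 1) * x := by
        intro m
        have hb := binCoef_pos hαpos m
        have hr : (0:ℝ) < (α + m) / (m + 1) := by positivity
        have hxp : (0:ℝ) < x ^ m := pow_pos hxpos m
        rw [binCoef]
        rw [Real.norm_eq_abs, Real.norm_eq_abs,
          abs_of_pos (by exact mul_pos (mul_pos hb hr) (pow_pos hxpos _)),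
          abs_of_pos (mul_pos hb hxp), pow_succ]
        field_simp
      simp only [this]
      have h1 : Filter.Tendsto (fun m : ℕ => (α + m) / (m + 1)) Filter.atTop (nhds 1) := by
        have := Filter.Tendsto.div_atTop (f := fun m : ℕ => α - 1)
          (tendsto_const_nhds (x := α - 1))
          (Filter.tendsto_atTop_add_const_right Filter.atTop 1 tendsto_natCast_atTop_atTop)
        have h2 := this.add_const 1
        simp only [zero_add] at h2
        convert h2 using 2 with m
        have : (m : ℝ) + 1 ≠ 0 := by positivity
        field_simp
        ring
      have := h1.mul_const x
      simpa using this

lemma binCoef_alpha_zero {m : ℕ} (hm : m ≠ 0) : binCoef 0 m = 0 := by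
  induction m with
  | zero => exact absurd rfl hm
  | succ m ih =>
    rcases Nat.eq_zero_or_pos m with rfl | hmpos
    · simp [binCoef]
    · rw [binCoef, ih hmpos.ne', zero_mul]

lemma hasSum_binCoef {α : ℝ} (hα : 0 ≤ α) {x : ℝ} (hx0 : 0 ≤ x) (hx1 : x < 1) :
    HasSum (fun m : ℕ => binCoef α m * x ^ m) ((1 - x) ^ (-α)) := by
  rcases eq_or_lt_of_le hα with hα0 | hαpos
  · -- α = 0
    have : ((1 - x) ^ (-α) : ℝ) = 1 := by rw [← hα0, neg_zero, Real.rpow_zero]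
    rw [this]
    have h1 : (fun m : ℕ => binCoef α m * x ^ m) 0 = 1 := by simp [binCoef]
    rw [← h1]
    apply hasSum_single (f := fun m : ℕ => binCoef α m * x ^ m) 0
    intro m hm
    rw [← hα0, binCoef_alpha_zero hm, zero_mul]
  -- α > 0
  have hGα : 0 < Real.Gamma α := Real.Gamma_pos_of_pos hαpos
  have h1x : 0 < 1 - x := by linarith
  have hsum : Summable (fun m : ℕ => binCoef α m * x ^ m) := summable_binCoef hα hx0 hx1
  rw [Summable.hasSum_iff hsum]
  -- the integrand family
  set g : ℕ → ℝ → ℝ := fun m t => x ^ m / m.factorial * (Real.exp (-t) * t ^ (α + m - 1)) with hg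
  have hint : ∀ m : ℕ, IntegrableOn (g m) (Set.Ioi 0) := by
    intro m
    exact (Real.GammaIntegral_convergent (by positivity : (0:ℝ) < α + m)).const_mul _
  have hintval : ∀ m : ℕ, ∫ t in Set.Ioi 0, g m t
      = x ^ m / m.factorial * Real.Gamma (α + m) := by
    intro m
    rw [hg]
    simp only []
    rw [MeasureTheory.integral_const_mul, ← Real.Gamma_eq_integral (by positivity : (0:ℝ) < α + m)]
  have hgnonneg : ∀ m : ℕ, ∀ t ∈ Set.Ioi (0:ℝ), 0 ≤ g m t := by
    intro m t ht
    have ht' : (0:ℝ) < t := ht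
    have := Real.rpow_nonneg ht'.le (α + m - 1)
    positivity
  have hcsum : Summable (fun m : ℕ => x ^ m / m.factorial * Real.Gamma (α + m)) := by
    have : (fun m : ℕ => x ^ m / m.factorial * Real.Gamma (α + m))
        = fun m : ℕ => Real.Gamma α * (binCoef α m * x ^ m) := by
      funext m
      rw [binCoef_eq_gamma hαpos]
      have h1 : (m.factorial : ℝ) ≠ 0 := by positivity
      field_simp
    rw [this]
    exact hsum.mul_left _
  -- interchange sum and integral
  have hswap : ∫ t in Set.Ioi 0, (∑' m : ℕ, g m t) = ∑' m : ℕ, ∫ t in Set.Ioi 0, g m t := by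
    apply MeasureTheory.integral_tsum
    · exact fun m => (hint m).aestronglyMeasurable
    · have hlint : ∀ m : ℕ, ∫⁻ t in Set.Ioi 0, ‖g m t‖ₑ
          = ENNReal.ofReal (x ^ m / m.factorial * Real.Gamma (α + m)) := by
        intro m
        rw [← MeasureTheory.ofReal_integral_norm_eq_lintegral_enorm (hint m)]
        congr 1
        rw [← hintval m]
        apply MeasureTheory.integral_congr_ae
        filter_upwards [MeasureTheory.ae_restrict_mem measurableSet_Ioi] with t ht
        exact Real.norm_of_nonneg (hgnonneg m t ht)
      simp only [hlint]
      rw [← ENNReal.ofReal_tsum_of_nonneg (fun m => by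
        have := Real.Gamma_nonneg_of_nonneg (by positivity : (0:ℝ) ≤ α + m)
        positivity) hcsum]
      exact ENNReal.ofReal_ne_top
  -- pointwise sum of the family
  have hptwise : ∀ t ∈ Set.Ioi (0:ℝ),
      (∑' m : ℕ, g m t) = t ^ (α - 1) * Real.exp (-((1 - x) * t)) := by
    intro t ht
    have ht' : (0:ℝ) < t := ht
    have hexp : HasSum (fun m : ℕ => (x * t) ^ m / m.factorial) (Real.exp (x * t)) := by
      rw [Real.exp_eq_exp_ℝ]
      exact NormedSpace.expSeries_div_hasSum_exp (x * t)
    have h2 : HasSum (fun m : ℕ => Real.exp (-t) * t ^ (α - 1) * ((x * t) ^ m / m.factorial))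
        (Real.exp (-t) * t ^ (α - 1) * Real.exp (x * t)) := hexp.mul_left _
    have heq : (fun m : ℕ => Real.exp (-t) * t ^ (α - 1) * ((x * t) ^ m / m.factorial))
        = fun m : ℕ => g m t := by
      funext m
      rw [hg]
      simp only []
      rw [show α + m - 1 = (α - 1) + m by ring, Real.rpow_add ht', Real.rpow_natCast,
        mul_pow]
      field_simp
    rw [heq] at h2
    rw [h2.tsum_eq]
    rw [show -((1 - x) * t) = -t + x * t by ring, Real.exp_add]
    ring
  -- compute the integral of the closed form
  have hclosed : ∫ t in Set.Ioi 0, t ^ (α - 1) * Real.exp (-((1 - x) * t))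
      = (1 / (1 - x)) ^ α * Real.Gamma α :=
    Real.integral_rpow_mul_exp_neg_mul_Ioi hαpos h1x
  have hLHS : ∫ t in Set.Ioi 0, (∑' m : ℕ, g m t)
      = (1 / (1 - x)) ^ α * Real.Gamma α := by
    rw [← hclosed]
    apply MeasureTheory.integral_congr_ae
    filter_upwards [MeasureTheory.ae_restrict_mem measurableSet_Ioi] with t ht
    exact hptwise t ht
  have hkey : Real.Gamma α * (∑' m : ℕ, binCoef α m * x ^ m)
      = (1 / (1 - x)) ^ α * Real.Gamma α := by
    rw [← hLHS, hswap]
    simp only [hintval]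
    rw [← tsum_mul_left]
    congr 1
    funext m
    rw [binCoef_eq_gamma hαpos]
    have h1 : (m.factorial : ℝ) ≠ 0 := by positivity
    field_simp
  have : (∑' m : ℕ, binCoef α m * x ^ m) = (1 / (1 - x)) ^ α :=
    mul_left_cancel₀ hGα.ne' (by rw [hkey]; ring)
  rw [this, one_div, Real.inv_rpow h1x.le, ← Real.rpow_neg h1x.le]

/-! ### Lattice Fourier analysis machinery -/

open Complex in
/-- The character `ξ ↦ e^{i h k·ξ}` on the box. -/
def eChar (d : ℕ) (h : ℝ) (k : ZLat d) (ξ : Fin d → ℝ) : ℂ :=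
  Complex.exp (Complex.I * ((h * ∑ j : Fin d, (k j : ℝ) * ξ j : ℝ) : ℂ))

lemma eChar_zero (d : ℕ) (h : ℝ) (ξ : Fin d → ℝ) : eChar d h 0 ξ = 1 := by
  simp [eChar]

lemma eChar_add (d : ℕ) (h : ℝ) (k k' : ZLat d) (ξ : Fin d → ℝ) :
    eChar d h (k + k') ξ = eChar d h k ξ * eChar d h k' ξ := by
  rw [eChar, eChar, eChar, ← Complex.exp_add]
  have hs : ∑ j : Fin d, (((k + k') j : ℝ)) * ξ j
      = (∑ j : Fin d, (k j : ℝ) * ξ j) + ∑ j : Fin d, (k' j : ℝ) * ξ j := by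
    rw [← Finset.sum_add_distrib]
    apply Finset.sum_congr rfl
    intro j _
    have : (k + k') j = k j + k' j := rfl
    rw [this]
    push_cast
    ring
  rw [hs]
  push_cast
  ring

lemma continuous_eChar (d : ℕ) (h : ℝ) (k : ZLat d) : Continuous (eChar d h k) := by
  apply Complex.continuous_exp.comp
  apply continuous_const.mul
  apply Complex.continuous_ofReal.comp
  apply continuous_const.mul
  exact continuous_finset_sum _ fun j _ => continuous_const.mul (continuous_apply j)

lemma measurableSet_fourierBox (d : ℕ) (h : ℝ) : MeasurableSet (fourierBox d h) :=
  MeasurableSet.univ_pi fun _ => measurableSet_Icc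

lemma isCompact_fourierBox (d : ℕ) (h : ℝ) : IsCompact (fourierBox d h) :=
  isCompact_univ_pi fun _ => isCompact_Icc

lemma integrableOn_box {d : ℕ} {h : ℝ} {f : (Fin d → ℝ) → ℂ} (hf : Continuous f) :
    IntegrableOn f (fourierBox d h) :=
  hf.continuousOn.integrableOn_compact (isCompact_fourierBox d h)

/-- Orthogonality of characters on the box. -/
lemma integral_eChar (d : ℕ) {h : ℝ} (hh : 0 < h) (n : ZLat d) :
    ∫ ξ in fourierBox d h, eChar d h n ξ
      = if n = 0 then (((2 * π / h) ^ d : ℝ) : ℂ) else 0 := by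
  have hL : (0:ℝ) < 2 * π / h := by positivity
  have hprod : ∀ ξ : Fin d → ℝ, eChar d h n ξ
      = ∏ j : Fin d, Complex.exp (Complex.I * (h * (n j : ℝ) * ξ j : ℝ)) := by
    intro ξ
    rw [eChar, ← Complex.exp_sum]
    congr 1
    push_cast
    rw [Finset.mul_sum, Finset.mul_sum]
    congr 1
    funext j
    ring
  calc ∫ ξ in fourierBox d h, eChar d h n ξ
      = ∫ ξ : Fin d → ℝ, ∏ j : Fin d,
          (Set.Icc (0:ℝ) (2 * π / h)).indicator
            (fun t => Complex.exp (Complex.I * (h * (n j : ℝ) * t : ℝ))) (ξ j) := by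
        rw [← MeasureTheory.integral_indicator (measurableSet_fourierBox d h)]
        congr 1
        funext ξ
        by_cases hmem : ξ ∈ fourierBox d h
        · rw [Set.indicator_of_mem hmem, hprod ξ]
          apply Finset.prod_congr rfl
          intro j _
          rw [Set.indicator_of_mem (Set.mem_univ_pi.mp hmem j)]
        · rw [Set.indicator_of_notMem hmem]
          rw [fourierBox, Set.mem_pi] at hmem
          push_neg at hmem
          obtain ⟨j, _, hj⟩ := hmem
          exact (Finset.prod_eq_zero (Finset.mem_univ j)
            (Set.indicator_of_notMem hj _)).symm
    _ = ∏ j : Fin d, ∫ t : ℝ, (Set.Icc (0:ℝ) (2 * π / h)).indicator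
          (fun t => Complex.exp (Complex.I * (h * (n j : ℝ) * t : ℝ))) t := by
        exact MeasureTheory.integral_fintype_prod_eq_prod (μ := fun _ => volume) _
    _ = ∏ j : Fin d, (if n j = 0 then ((2 * π / h : ℝ) : ℂ) else 0) := by
        apply Finset.prod_congr rfl
        intro j _
        rw [MeasureTheory.integral_indicator measurableSet_Icc,
          MeasureTheory.integral_Icc_eq_integral_Ioc,
          ← intervalIntegral.integral_of_le hL.le]
        by_cases hnj : n j = 0
        · simp only [hnj, if_true]
          norm_num
        · rw [if_neg hnj]
          have hc : (Complex.I * (h : ℂ) * (n j : ℂ)) ≠ 0 := by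
            simp [Complex.I_ne_zero, hh.ne', hnj]
          have : ∀ t : ℝ, Complex.I * ((h * (n j : ℝ) * t : ℝ) : ℂ)
              = (Complex.I * (h : ℂ) * (n j : ℂ)) * (t : ℂ) := by
            intro t; push_cast; ring
          simp_rw [this]
          rw [integral_exp_mul_complex hc]
          have h1 : (Complex.I * (h:ℂ) * (n j : ℂ)) * ((2 * π / h : ℝ) : ℂ)
              = (n j : ℂ) * (2 * (π:ℂ) * Complex.I) := by
            have hhc : (h:ℂ) ≠ 0 := Complex.ofReal_ne_zero.mpr hh.ne'
            push_cast
            field_simp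
          rw [Complex.ofReal_zero, mul_zero, Complex.exp_zero, h1,
            Complex.exp_int_mul_two_pi_mul_I]
          simp
    _ = if n = 0 then (((2 * π / h) ^ d : ℝ) : ℂ) else 0 := by
        by_cases hn : n = 0
        · rw [if_pos hn]
          subst hn
          simp only [Pi.zero_apply, if_pos rfl]
          rw [Finset.prod_const]
          push_cast
          simp
        · rw [if_neg hn]
          obtain ⟨j, hj⟩ := Function.ne_iff.mp hn
          exact Finset.prod_eq_zero (Finset.mem_univ j) (if_neg hj)

/-! ### The weight in the group algebra -/

open AddMonoidAlgebra in
/-- The basic nonnegative weight whose evaluation is `ρ ∑_j cos²(hξ_j/2)`. -/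
def wgt (d : ℕ) (h : ℝ) : AddMonoidAlgebra ℝ (ZLat d) :=
  ∑ j : Fin d, (AddMonoidAlgebra.single (0 : ZLat d) (4 / (h ^ 2 + 4 * d) / 2)
    + AddMonoidAlgebra.single (Pi.single j 1 : ZLat d) (4 / (h ^ 2 + 4 * d) / 4)
    + AddMonoidAlgebra.single (-(Pi.single j 1) : ZLat d) (4 / (h ^ 2 + 4 * d) / 4))

lemma wgt_coeff_nonneg (d : ℕ) {h : ℝ} (hh : 0 < h) (k : ZLat d) : 0 ≤ (wgt d h).coeff k := by
  classical
  have hρ : (0:ℝ) ≤ 4 / (h ^ 2 + 4 * d) := by positivity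
  rw [wgt]
  rw [AddMonoidAlgebra.coeff_sum, Finsupp.finset_sum_apply]
  apply Finset.sum_nonneg
  intro j _
  rw [AddMonoidAlgebra.coeff_add, AddMonoidAlgebra.coeff_add, Finsupp.add_apply, Finsupp.add_apply]
  have : ∀ (a : ZLat d) (b : ℝ), 0 ≤ b → 0 ≤ (AddMonoidAlgebra.single a b).coeff k := by
    intro a b hb
    rw [AddMonoidAlgebra.coeff_single, Finsupp.single_apply]
    split <;> simp [hb]
  have h1 := this 0 (4 / (h ^ 2 + 4 * d) / 2) (by linarith)
  have h2 := this (Pi.single j 1) (4 / (h ^ 2 + 4 * d) / 4) (by linarith)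
  have h3 := this (-(Pi.single j 1)) (4 / (h ^ 2 + 4 * d) / 4) (by linarith)
  linarith

lemma mul_coeff_nonneg {d : ℕ} (P Q : AddMonoidAlgebra ℝ (ZLat d))
    (hP : ∀ k, 0 ≤ P.coeff k) (hQ : ∀ k, 0 ≤ Q.coeff k) (k : ZLat d) : 0 ≤ (P * Q).coeff k := by
  classical
  rw [AddMonoidAlgebra.coeff_mul]
  unfold Finsupp.sum
  apply Finset.sum_nonneg
  intro a₁ _
  apply Finset.sum_nonneg
  intro a₂ _
  simp only []
  split
  · exact mul_nonneg (hP _) (hQ _)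
  · exact le_refl _

lemma pow_coeff_nonneg {d : ℕ} (P : AddMonoidAlgebra ℝ (ZLat d))
    (hP : ∀ k, 0 ≤ P.coeff k) (m : ℕ) (k : ZLat d) : 0 ≤ (P ^ m).coeff k := by
  induction m generalizing k with
  | zero =>
    rw [pow_zero]
    have : (1 : AddMonoidAlgebra ℝ (ZLat d)).coeff k
        = (AddMonoidAlgebra.single (0 : ZLat d) (1:ℝ)).coeff k := rfl
    rw [this, AddMonoidAlgebra.coeff_single, Finsupp.single_apply]
    split <;> norm_num
  | succ m ih =>
    rw [pow_succ]
    exact mul_coeff_nonneg _ _ (fun k' => ih k') hP k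

/-- The total-coefficient (augmentation) algebra homomorphism. -/
def totHom (d : ℕ) : AddMonoidAlgebra ℝ (ZLat d) →ₐ[ℝ] ℝ :=
  AddMonoidAlgebra.lift ℝ ℝ (ZLat d) 1

lemma totHom_apply {d : ℕ} (P : AddMonoidAlgebra ℝ (ZLat d)) :
    totHom d P = ∑ k ∈ P.coeff.support, P.coeff k := by
  rw [totHom, AddMonoidAlgebra.lift_apply]
  rw [Finsupp.sum]
  apply Finset.sum_congr rfl
  intro k _
  simp

lemma totHom_single {d : ℕ} (a : ZLat d) (b : ℝ) :
    totHom d (AddMonoidAlgebra.single a b) = b := by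
  rw [totHom, AddMonoidAlgebra.lift_single]
  simp

lemma coeff_le_totHom {d : ℕ} (P : AddMonoidAlgebra ℝ (ZLat d))
    (hP : ∀ k, 0 ≤ P.coeff k) (k : ZLat d) : P.coeff k ≤ totHom d P := by
  classical
  rw [totHom_apply]
  by_cases hk : k ∈ P.coeff.support
  · exact Finset.single_le_sum (f := fun k => P.coeff k) (fun i _ => hP i) hk
  · rw [Finsupp.notMem_support_iff.mp hk]
    exact Finset.sum_nonneg fun i _ => hP i

lemma totHom_wgt (d : ℕ) (h : ℝ) : totHom d (wgt d h) = 4 * d / (h ^ 2 + 4 * d) := by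
  rw [wgt, map_sum]
  have : ∀ j : Fin d, totHom d
      (AddMonoidAlgebra.single (0 : ZLat d) (4 / (h ^ 2 + 4 * d) / 2)
        + AddMonoidAlgebra.single (Pi.single j 1 : ZLat d) (4 / (h ^ 2 + 4 * d) / 4)
        + AddMonoidAlgebra.single (-(Pi.single j 1) : ZLat d) (4 / (h ^ 2 + 4 * d) / 4))
      = 4 / (h ^ 2 + 4 * d) := by
    intro j
    rw [map_add, map_add, totHom_single, totHom_single, totHom_single]
    ring
  rw [Finset.sum_congr rfl (fun j _ => this j), Finset.sum_const, Finset.card_univ,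
    Fintype.card_fin]
  simp only [nsmul_eq_mul]
  ring

/-- The character as a monoid homomorphism from `Multiplicative (ZLat d)`. -/
def charFun (d : ℕ) (h : ℝ) (ξ : Fin d → ℝ) : Multiplicative (ZLat d) →* ℂ where
  toFun k := eChar d h (Multiplicative.toAdd k) ξ
  map_one' := eChar_zero d h ξ
  map_mul' k k' := eChar_add d h (Multiplicative.toAdd k) (Multiplicative.toAdd k') ξ

/-- Evaluation of an element of the group algebra as a function on the box. -/
def evalHom (d : ℕ) (h : ℝ) (ξ : Fin d → ℝ) : AddMonoidAlgebra ℝ (ZLat d) →ₐ[ℝ] ℂ :=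
  AddMonoidAlgebra.lift ℝ ℂ (ZLat d) (charFun d h ξ)

lemma evalHom_apply {d : ℕ} (h : ℝ) (ξ : Fin d → ℝ) (P : AddMonoidAlgebra ℝ (ZLat d)) :
    evalHom d h ξ P = ∑ k ∈ P.coeff.support, (P.coeff k : ℂ) * eChar d h k ξ := by
  rw [evalHom, AddMonoidAlgebra.lift_apply, Finsupp.sum]
  apply Finset.sum_congr rfl
  intro k _
  rw [Complex.real_smul]
  rfl

lemma evalHom_single {d : ℕ} (h : ℝ) (ξ : Fin d → ℝ) (a : ZLat d) (b : ℝ) :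
    evalHom d h ξ (AddMonoidAlgebra.single a b) = (b : ℂ) * eChar d h a ξ := by
  rw [evalHom, AddMonoidAlgebra.lift_single, Complex.real_smul]
  rfl

lemma sum_pi_single_mul {d : ℕ} (j : Fin d) (ξ : Fin d → ℝ) :
    ∑ j' : Fin d, (((Pi.single j 1 : ZLat d) j' : ℝ)) * ξ j' = ξ j := by
  rw [Finset.sum_eq_single j]
  · simp
  · intro j' _ hj'
    rw [Pi.single_eq_of_ne hj']
    simp
  · intro hj
    exact absurd (Finset.mem_univ j) hj

lemma sum_neg_pi_single_mul {d : ℕ} (j : Fin d) (ξ : Fin d → ℝ) :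
    ∑ j' : Fin d, (((-(Pi.single j 1) : ZLat d) j' : ℝ)) * ξ j' = -ξ j := by
  have : ∀ j' : Fin d, (((-(Pi.single j 1) : ZLat d) j' : ℝ)) * ξ j'
      = -((((Pi.single j 1 : ZLat d) j' : ℝ)) * ξ j') := by
    intro j'
    have : (-(Pi.single j 1) : ZLat d) j' = -((Pi.single j 1 : ZLat d) j') := rfl
    rw [this]
    push_cast
    ring
  rw [Finset.sum_congr rfl (fun j' _ => this j'), Finset.sum_neg_distrib,
    sum_pi_single_mul]

lemma evalHom_wgt (d : ℕ) (h : ℝ) (ξ : Fin d → ℝ) :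
    evalHom d h ξ (wgt d h)
      = ((4 / (h ^ 2 + 4 * d) * ∑ j : Fin d, Real.cos (h * ξ j / 2) ^ 2 : ℝ) : ℂ) := by
  set ρ : ℝ := 4 / (h ^ 2 + 4 * d) with hρ
  rw [wgt, map_sum]
  have hval : ∀ j : Fin d, evalHom d h ξ
      (AddMonoidAlgebra.single (0 : ZLat d) (ρ / 2)
        + AddMonoidAlgebra.single (Pi.single j 1 : ZLat d) (ρ / 4)
        + AddMonoidAlgebra.single (-(Pi.single j 1) : ZLat d) (ρ / 4))
      = ((ρ * Real.cos (h * ξ j / 2) ^ 2 : ℝ) : ℂ) := by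
    intro j
    rw [map_add, map_add, evalHom_single, evalHom_single, evalHom_single]
    have e0 : eChar d h (0 : ZLat d) ξ = 1 := eChar_zero d h ξ
    have e1 : eChar d h (Pi.single j 1 : ZLat d) ξ
        = Complex.exp (((h * ξ j : ℝ) : ℂ) * Complex.I) := by
      rw [eChar, sum_pi_single_mul, mul_comm]
    have e2 : eChar d h (-(Pi.single j 1) : ZLat d) ξ
        = Complex.exp ((-(h * ξ j : ℝ) : ℂ) * Complex.I) := by
      rw [eChar, sum_neg_pi_single_mul, mul_comm]
      norm_num
    rw [e0, e1, e2, Complex.exp_mul_I, Complex.exp_mul_I]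
    rw [Real.cos_sq, show 2 * (h * ξ j / 2) = h * ξ j by ring]
    rw [← Complex.ofReal_cos, ← Complex.ofReal_sin]
    rw [show (-(h * ξ j : ℝ) : ℂ) = ((-(h * ξ j) : ℝ) : ℂ) by push_cast; ring]
    rw [← Complex.ofReal_cos, ← Complex.ofReal_sin, Real.cos_neg, Real.sin_neg]
    push_cast
    ring
  rw [Finset.sum_congr rfl (fun j _ => hval j)]
  push_cast
  rw [Finset.mul_sum]

lemma continuous_evalHom {d : ℕ} (h : ℝ) (P : AddMonoidAlgebra ℝ (ZLat d)) :
    Continuous (fun ξ => evalHom d h ξ P) := by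
  classical
  have : (fun ξ => evalHom d h ξ P)
      = fun ξ => ∑ k ∈ P.coeff.support, (P.coeff k : ℂ) * eChar d h k ξ := by
    funext ξ; exact evalHom_apply h ξ P
  rw [this]
  exact continuous_finset_sum _ fun k _ => continuous_const.mul (continuous_eChar d h k)

/-- Fourier-coefficient extraction for group-algebra elements. -/
lemma integral_evalHom_mul_eChar {d : ℕ} {h : ℝ} (hh : 0 < h)
    (P : AddMonoidAlgebra ℝ (ZLat d)) (k : ZLat d) :
    ∫ ξ in fourierBox d h, evalHom d h ξ P * eChar d h k ξ
      = (((2 * π / h) ^ d : ℝ) : ℂ) * (P.coeff (-k) : ℂ) := by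
  classical
  have hinteg : ∀ k' : ZLat d,
      IntegrableOn (fun ξ => (P.coeff k' : ℂ) * eChar d h (k' + k) ξ) (fourierBox d h) :=
    fun k' => integrableOn_box (continuous_const.mul (continuous_eChar d h (k' + k)))
  have hptw : ∀ ξ : Fin d → ℝ, evalHom d h ξ P * eChar d h k ξ
      = ∑ k' ∈ P.coeff.support, (P.coeff k' : ℂ) * eChar d h (k' + k) ξ := by
    intro ξ
    rw [evalHom_apply, Finset.sum_mul]
    apply Finset.sum_congr rfl
    intro k' _
    rw [eChar_add]
    ring
  calc ∫ ξ in fourierBox d h, evalHom d h ξ P * eChar d h k ξ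
      = ∫ ξ in fourierBox d h, ∑ k' ∈ P.coeff.support, (P.coeff k' : ℂ) * eChar d h (k' + k) ξ := by
        apply MeasureTheory.integral_congr_ae
        exact Filter.Eventually.of_forall fun ξ => hptw ξ
    _ = ∑ k' ∈ P.coeff.support, ∫ ξ in fourierBox d h, (P.coeff k' : ℂ) * eChar d h (k' + k) ξ :=
        MeasureTheory.integral_finset_sum _ fun k' _ => hinteg k'
    _ = ∑ k' ∈ P.coeff.support, (P.coeff k' : ℂ)
          * (if k' = -k then (((2 * π / h) ^ d : ℝ) : ℂ) else 0) := by
        apply Finset.sum_congr rfl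
        intro k' _
        rw [MeasureTheory.integral_const_mul, integral_eChar d hh (k' + k)]
        congr 1
        by_cases hk' : k' = -k
        · rw [if_pos (by rw [hk']; abel), if_pos hk']
        · rw [if_neg (fun hc => hk' (by
            have := hc
            rwa [add_eq_zero_iff_eq_neg] at this)), if_neg hk']
    _ = (((2 * π / h) ^ d : ℝ) : ℂ) * (P.coeff (-k) : ℂ) := by
        rw [Finset.sum_congr rfl (fun k' _ => by
          rw [mul_ite, mul_zero] : ∀ k' ∈ P.coeff.support, _ = _)]
        rw [Finset.sum_ite_eq' P.coeff.support (-k)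
          (fun k' => (P.coeff k' : ℂ) * (((2 * π / h) ^ d : ℝ) : ℂ))]
        by_cases hmem : -k ∈ P.coeff.support
        · rw [if_pos hmem]; ring
        · rw [if_neg hmem, Finsupp.notMem_support_iff.mp hmem]
          simp

/-! ### The kernel formula -/

lemma norm_eChar {d : ℕ} (h : ℝ) (k : ZLat d) (ξ : Fin d → ℝ) : ‖eChar d h k ξ‖ = 1 := by
  rw [eChar, mul_comm, Complex.norm_exp_ofReal_mul_I]

/-- `X = ρ d`, the total mass of the weight. -/
def Xc (d : ℕ) (h : ℝ) : ℝ := 4 * d / (h ^ 2 + 4 * d)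

/-- `B`, the normalizing constant with `M = B (1 - x)`. -/
def Bc (d : ℕ) (h : ℝ) : ℝ := (h ^ 2 + 4 * d) / h ^ 2

section KernelFormula

variable {d : ℕ} {h : ℝ}

lemma Xc_nonneg (d : ℕ) {h : ℝ} (hh : 0 < h) : 0 ≤ Xc d h := by
  rw [Xc]; positivity

lemma Xc_lt_one (d : ℕ) {h : ℝ} (hh : 0 < h) : Xc d h < 1 := by
  rw [Xc, div_lt_one (by positivity)]
  nlinarith

lemma Bc_pos (d : ℕ) {h : ℝ} (hh : 0 < h) : 0 < Bc d h := by
  rw [Bc]; positivity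

lemma Bc_mul_one_sub_Xc (d : ℕ) {h : ℝ} (hh : 0 < h) : Bc d h * (1 - Xc d h) = 1 := by
  rw [Bc, Xc]
  have h1 : h ^ 2 ≠ 0 := by positivity
  have h2 : h ^ 2 + 4 * d ≠ 0 := by positivity
  field_simp
  ring

/-- The real symbol value `x(ξ)`. -/
def xval (d : ℕ) (h : ℝ) (ξ : Fin d → ℝ) : ℝ :=
  4 / (h ^ 2 + 4 * d) * ∑ j : Fin d, Real.cos (h * ξ j / 2) ^ 2

lemma xval_nonneg (d : ℕ) {h : ℝ} (hh : 0 < h) (ξ : Fin d → ℝ) : 0 ≤ xval d h ξ := by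
  rw [xval]
  apply mul_nonneg (by positivity)
  exact Finset.sum_nonneg fun j _ => sq_nonneg _

lemma xval_le_Xc (d : ℕ) {h : ℝ} (hh : 0 < h) (ξ : Fin d → ℝ) : xval d h ξ ≤ Xc d h := by
  rw [xval, Xc]
  have hsum : ∑ j : Fin d, Real.cos (h * ξ j / 2) ^ 2 ≤ d := by
    calc ∑ j : Fin d, Real.cos (h * ξ j / 2) ^ 2 ≤ ∑ j : Fin d, 1 :=
      Finset.sum_le_sum fun j _ => Real.cos_sq_le_one _
    _ = d := by simp
  have h2 : (0:ℝ) < h ^ 2 + 4 * d := by positivity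
  rw [div_mul_eq_mul_div, mul_comm, div_le_div_iff₀ h2 h2]
  nlinarith

lemma Msymb_eq (d : ℕ) {h : ℝ} (hh : 0 < h) (ξ : Fin d → ℝ) :
    Msymb d h ξ = Bc d h * (1 - xval d h ξ) := by
  rw [Msymb, Bc, xval]
  have hsin : ∀ j : Fin d, Real.sin (h * ξ j / 2) ^ 2 = 1 - Real.cos (h * ξ j / 2) ^ 2 :=
    fun j => Real.sin_sq _
  rw [Finset.sum_congr rfl fun j _ => hsin j, Finset.sum_sub_distrib, Finset.sum_const,
    Finset.card_univ, Fintype.card_fin]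
  have h1 : h ^ 2 ≠ 0 := by positivity
  have h2 : h ^ 2 + 4 * (d:ℝ) ≠ 0 := by positivity
  field_simp
  ring

lemma one_sub_xval_pos (d : ℕ) {h : ℝ} (hh : 0 < h) (ξ : Fin d → ℝ) :
    0 < 1 - xval d h ξ :=
  sub_pos.mpr (lt_of_le_of_lt (xval_le_Xc d hh ξ) (Xc_lt_one d hh))

lemma wgt_pow_coeff_nonneg (d : ℕ) {h : ℝ} (hh : 0 < h) (m : ℕ) (n : ZLat d) :
    0 ≤ (wgt d h ^ m).coeff n :=
  pow_coeff_nonneg _ (wgt_coeff_nonneg d hh) m n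

lemma totHom_wgt_pow (d : ℕ) (h : ℝ) (m : ℕ) :
    totHom d (wgt d h ^ m) = Xc d h ^ m := by
  rw [map_pow, totHom_wgt, Xc]

lemma wgt_pow_coeff_le (d : ℕ) {h : ℝ} (hh : 0 < h) (m : ℕ) (n : ZLat d) :
    (wgt d h ^ m).coeff n ≤ Xc d h ^ m := by
  rw [← totHom_wgt_pow]
  exact coeff_le_totHom _ (fun k => wgt_pow_coeff_nonneg d hh m k) n

lemma summable_inner (d : ℕ) {h α : ℝ} (hh : 0 < h) (hα : 0 ≤ α) (k : ZLat d) :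
    Summable (fun m : ℕ => binCoef α m * (wgt d h ^ m).coeff k) := by
  apply Summable.of_nonneg_of_le
    (fun m => mul_nonneg (binCoef_nonneg hα m) (wgt_pow_coeff_nonneg d hh m k))
    (fun m => mul_le_mul_of_nonneg_left (wgt_pow_coeff_le d hh m k) (binCoef_nonneg hα m))
  exact summable_binCoef hα (Xc_nonneg d hh) (Xc_lt_one d hh)

end KernelFormula

/-- The key identity: the kernel of `(1-Δ_h)^{-α}` as a convergent nonnegative series. -/
lemma multKernel_eq (d : ℕ) {h α : ℝ} (hh : 0 < h) (hα : 0 ≤ α) (k : ZLat d) :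
    multKernel d h (fun ξ => ((Msymb d h ξ ^ (-α) : ℝ) : ℂ)) k
      = ((Bc d h ^ (-α) * ∑' m : ℕ, binCoef α m * (wgt d h ^ m).coeff (-k) : ℝ) : ℂ) := by
  have hX0 := Xc_nonneg d hh
  have hX1 := Xc_lt_one d hh
  have hsumX : Summable (fun m : ℕ => binCoef α m * Xc d h ^ m) :=
    summable_binCoef hα hX0 hX1
  -- the summand family
  set F : ℕ → (Fin d → ℝ) → ℂ := fun m ξ =>
    ((binCoef α m : ℝ) : ℂ) * evalHom d h ξ (wgt d h ^ m) * eChar d h k ξ with hF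
  -- pointwise identity for the integrand
  have hptw : ∀ ξ : Fin d → ℝ,
      ((Msymb d h ξ ^ (-α) : ℝ) : ℂ) * eChar d h k ξ
        = ((Bc d h ^ (-α) : ℝ) : ℂ) * ∑' m : ℕ, F m ξ := by
    intro ξ
    have hxε := xval_nonneg d hh ξ
    have hx1 := one_sub_xval_pos d hh ξ
    have hsplit : Msymb d h ξ ^ (-α) = Bc d h ^ (-α) * (1 - xval d h ξ) ^ (-α) := by
      rw [Msymb_eq d hh ξ, Real.mul_rpow (Bc_pos d hh).le hx1.le]
    have hbin : HasSum (fun m : ℕ => binCoef α m * xval d h ξ ^ m)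
        ((1 - xval d h ξ) ^ (-α)) :=
      hasSum_binCoef hα hxε (lt_of_le_of_lt (xval_le_Xc d hh ξ) hX1)
    have heval : ∀ m : ℕ, evalHom d h ξ (wgt d h ^ m) = ((xval d h ξ ^ m : ℝ) : ℂ) := by
      intro m
      rw [map_pow, evalHom_wgt]
      rw [Complex.ofReal_pow]
      rfl
    have hFeq : ∀ m : ℕ, F m ξ = ((binCoef α m * xval d h ξ ^ m : ℝ) : ℂ) * eChar d h k ξ := by
      intro m
      rw [hF]
      simp only []
      rw [heval m]
      push_cast
      ring
    have hsum2 : HasSum (fun m : ℕ => F m ξ)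
        ((((1 - xval d h ξ) ^ (-α) : ℝ) : ℂ) * eChar d h k ξ) := by
      have h' := (hbin.mapL Complex.ofRealCLM).mul_right (eChar d h k ξ)
      simp only [Complex.ofRealCLM_apply] at h'
      have heq2 : (fun m : ℕ => ((binCoef α m * xval d h ξ ^ m : ℝ) : ℂ) * eChar d h k ξ)
          = fun m : ℕ => F m ξ := by
        funext m
        rw [hFeq m]
      rwa [heq2] at h'
    rw [hsum2.tsum_eq, hsplit]
    push_cast
    ring
  -- swap the integral and the sum
  have hmeas : ∀ m : ℕ, AEStronglyMeasurable (F m)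
      ((volume : Measure (Fin d → ℝ)).restrict (fourierBox d h)) := by
    intro m
    exact ((continuous_const.mul (continuous_evalHom h (wgt d h ^ m))).mul
      (continuous_eChar d h k)).aestronglyMeasurable
  have hVfin : (volume : Measure (Fin d → ℝ)) (fourierBox d h) < ⊤ :=
    (isCompact_fourierBox d h).measure_lt_top
  have hFnorm : ∀ m : ℕ, ∀ ξ ∈ fourierBox d h, ‖F m ξ‖ ≤ binCoef α m * Xc d h ^ m := by
    intro m ξ _
    have hxε := xval_nonneg d hh ξ
    have heval : evalHom d h ξ (wgt d h ^ m) = ((xval d h ξ ^ m : ℝ) : ℂ) := by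
      rw [map_pow, evalHom_wgt, Complex.ofReal_pow]; rfl
    rw [hF]
    simp only []
    rw [norm_mul, norm_mul, norm_eChar, mul_one, heval, Complex.norm_real, Complex.norm_real]
    rw [Real.norm_of_nonneg (binCoef_nonneg hα m), Real.norm_of_nonneg (by positivity)]
    exact mul_le_mul_of_nonneg_left (pow_le_pow_left₀ hxε (xval_le_Xc d hh ξ) m)
      (binCoef_nonneg hα m)
  have hswap : ∫ ξ in fourierBox d h, ∑' m : ℕ, F m ξ
      = ∑' m : ℕ, ∫ ξ in fourierBox d h, F m ξ := by
    apply MeasureTheory.integral_tsum hmeas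
    have hbound : ∀ m : ℕ, ∫⁻ ξ in fourierBox d h, ‖F m ξ‖ₑ
        ≤ ENNReal.ofReal (binCoef α m * Xc d h ^ m) * volume (fourierBox d h) := by
      intro m
      calc ∫⁻ ξ in fourierBox d h, ‖F m ξ‖ₑ
          ≤ ∫⁻ _ in fourierBox d h, ENNReal.ofReal (binCoef α m * Xc d h ^ m) := by
            apply MeasureTheory.lintegral_mono_ae
            filter_upwards [MeasureTheory.ae_restrict_mem (measurableSet_fourierBox d h)]
              with ξ hξ
            rw [← ofReal_norm]
            exact ENNReal.ofReal_le_ofReal (hFnorm m ξ hξ)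
        _ = ENNReal.ofReal (binCoef α m * Xc d h ^ m) * volume (fourierBox d h) := by
            rw [MeasureTheory.lintegral_const, MeasureTheory.Measure.restrict_apply_univ]
    apply ne_top_of_le_ne_top ?_ (ENNReal.tsum_le_tsum hbound)
    rw [ENNReal.tsum_mul_right]
    apply ENNReal.mul_ne_top ?_ hVfin.ne
    rw [← ENNReal.ofReal_tsum_of_nonneg
      (fun m => mul_nonneg (binCoef_nonneg hα m) (pow_nonneg hX0 m)) hsumX]
    exact ENNReal.ofReal_ne_top
  -- compute each term
  have hterm : ∀ m : ℕ, ∫ ξ in fourierBox d h, F m ξ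
      = ((binCoef α m : ℝ) : ℂ) * ((((2 * π / h) ^ d : ℝ)) : ℂ)
          * (((wgt d h ^ m).coeff (-k) : ℝ) : ℂ) := by
    intro m
    rw [hF]
    simp only [mul_assoc]
    rw [MeasureTheory.integral_const_mul, integral_evalHom_mul_eChar hh (wgt d h ^ m) k]
  -- assemble
  have hunit : ((h / (2 * π)) ^ d : ℝ) * ((2 * π / h) ^ d : ℝ) = 1 := by
    rw [← mul_pow]
    have hπ : (π : ℝ) ≠ 0 := Real.pi_ne_zero
    field_simp
    exact one_pow d
  have hS : Summable (fun m : ℕ => binCoef α m * (wgt d h ^ m).coeff (-k)) :=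
    summable_inner d hh hα (-k)
  calc multKernel d h (fun ξ => ((Msymb d h ξ ^ (-α) : ℝ) : ℂ)) k
      = (((h / (2 * π)) ^ d : ℝ) : ℂ)
          * ∫ ξ in fourierBox d h, ((Msymb d h ξ ^ (-α) : ℝ) : ℂ) * eChar d h k ξ := rfl
    _ = (((h / (2 * π)) ^ d : ℝ) : ℂ)
          * ∫ ξ in fourierBox d h, ((Bc d h ^ (-α) : ℝ) : ℂ) * ∑' m : ℕ, F m ξ := by
        congr 1
        exact MeasureTheory.integral_congr_ae (Filter.Eventually.of_forall hptw)
    _ = (((h / (2 * π)) ^ d : ℝ) : ℂ) * (((Bc d h ^ (-α) : ℝ) : ℂ)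
          * ∑' m : ℕ, ∫ ξ in fourierBox d h, F m ξ) := by
        rw [MeasureTheory.integral_const_mul, hswap]
    _ = (((h / (2 * π)) ^ d : ℝ) : ℂ) * (((Bc d h ^ (-α) : ℝ) : ℂ)
          * ((((2 * π / h) ^ d : ℝ) : ℂ)
            * ((∑' m : ℕ, binCoef α m * (wgt d h ^ m).coeff (-k) : ℝ) : ℂ))) := by
        congr 1
        congr 1
        rw [tsum_congr hterm]
        have : ∀ m : ℕ, ((binCoef α m : ℝ) : ℂ) * ((((2 * π / h) ^ d : ℝ)) : ℂ)
            * (((wgt d h ^ m).coeff (-k) : ℝ) : ℂ)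
            = ((((2 * π / h) ^ d : ℝ)) : ℂ) * ((binCoef α m * (wgt d h ^ m).coeff (-k) : ℝ) : ℂ) := by
          intro m
          push_cast
          ring
        rw [tsum_congr this, tsum_mul_left]
        congr 1
        exact (ContinuousLinearMap.map_tsum Complex.ofRealCLM hS).symm
    _ = ((Bc d h ^ (-α) * ∑' m : ℕ, binCoef α m * (wgt d h ^ m).coeff (-k) : ℝ) : ℂ) := by
        rw [show ((((h / (2 * π)) ^ d : ℝ)) : ℂ) * (((Bc d h ^ (-α) : ℝ) : ℂ)
            * ((((2 * π / h) ^ d : ℝ) : ℂ)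
              * ((∑' m : ℕ, binCoef α m * (wgt d h ^ m).coeff (-k) : ℝ) : ℂ)))
          = ((((h / (2 * π)) ^ d * (2 * π / h) ^ d
              * (Bc d h ^ (-α) * ∑' m : ℕ, binCoef α m * (wgt d h ^ m).coeff (-k)) : ℝ)) : ℂ) by
            push_cast; ring]
        rw [hunit, one_mul]

/-! ### Summation of the kernel over the lattice -/

section KernelSum

variable {d : ℕ} {h α : ℝ}

lemma summable_coeff_neg (P : AddMonoidAlgebra ℝ (ZLat d)) :
    Summable (fun k : ZLat d => P.coeff (-k)) := by
  classical
  apply summable_of_finite_support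
  apply Set.Finite.subset (Set.Finite.image Neg.neg P.coeff.support.finite_toSet)
  intro k hk
  have : P.coeff (-k) ≠ 0 := hk
  have hmem : -k ∈ P.coeff.support := Finsupp.mem_support_iff.mpr this
  exact ⟨-k, hmem, by simp⟩

lemma tsum_coeff_neg (P : AddMonoidAlgebra ℝ (ZLat d)) :
    ∑' k : ZLat d, P.coeff (-k) = totHom d P := by
  classical
  rw [tsum_eq_sum (s := P.coeff.support.image Neg.neg) (by
    intro k hk
    by_contra hne
    exact hk (Finset.mem_image.mpr ⟨-k, Finsupp.mem_support_iff.mpr (by simpa using hne),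
      by simp⟩))]
  rw [Finset.sum_image (by intro x _ y _ hxy; exact neg_injective hxy)]
  rw [totHom_apply]
  apply Finset.sum_congr rfl
  intro n _
  simp

/-- The real-valued kernel. -/
def kerR (d : ℕ) (h α : ℝ) (k : ZLat d) : ℝ :=
  Bc d h ^ (-α) * ∑' m : ℕ, binCoef α m * (wgt d h ^ m).coeff (-k)

lemma kerR_nonneg (hh : 0 < h) (hα : 0 ≤ α) (k : ZLat d) : 0 ≤ kerR d h α k := by
  apply mul_nonneg (Real.rpow_nonneg (Bc_pos d hh).le _)
  exact tsum_nonneg fun m =>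
    mul_nonneg (binCoef_nonneg hα m) (wgt_pow_coeff_nonneg d hh m (-k))

lemma summable_kerR_aux (hh : 0 < h) (hα : 0 ≤ α) :
    Summable (fun p : ℕ × ZLat d => binCoef α p.1 * (wgt d h ^ p.1).coeff (-p.2)) := by
  have hnonneg : ∀ p : ℕ × ZLat d, 0 ≤ binCoef α p.1 * (wgt d h ^ p.1).coeff (-p.2) := fun p =>
    mul_nonneg (binCoef_nonneg hα p.1) (wgt_pow_coeff_nonneg d hh p.1 (-p.2))
  rw [summable_prod_of_nonneg hnonneg]
  constructor
  · intro m
    show Summable fun k : ZLat d => binCoef α m * (wgt d h ^ m).coeff (-k)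
    exact (summable_coeff_neg (wgt d h ^ m)).mul_left _
  · apply Summable.congr (summable_binCoef hα (Xc_nonneg d hh) (Xc_lt_one d hh))
    intro m
    show binCoef α m * Xc d h ^ m = ∑' k : ZLat d, binCoef α m * (wgt d h ^ m).coeff (-k)
    rw [tsum_mul_left, tsum_coeff_neg, totHom_wgt_pow]

lemma summable_kerR (hh : 0 < h) (hα : 0 ≤ α) : Summable (kerR d h α) := by
  have hk : kerR d h α
      = fun k : ZLat d => Bc d h ^ (-α) * ∑' m : ℕ, binCoef α m * (wgt d h ^ m).coeff (-k) := rfl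
  rw [hk]
  apply Summable.mul_left
  have hsw := (summable_kerR_aux (d := d) hh hα).prod_symm
  have := (summable_prod_of_nonneg (f := fun p : ZLat d × ℕ =>
      binCoef α p.2 * (wgt d h ^ p.2).coeff (-p.1)) (fun p =>
    mul_nonneg (binCoef_nonneg hα p.2) (wgt_pow_coeff_nonneg d hh p.2 (-p.1)))).mp hsw
  exact this.2

lemma tsum_kerR (hh : 0 < h) (hα : 0 ≤ α) : ∑' k : ZLat d, kerR d h α k = 1 := by
  have hX0 := Xc_nonneg d hh
  have hX1 := Xc_lt_one d hh
  simp only [kerR]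
  rw [tsum_mul_left]
  have hcomm := Summable.tsum_comm'
    (f := fun (m : ℕ) (k : ZLat d) => binCoef α m * (wgt d h ^ m).coeff (-k))
    (summable_kerR_aux hh hα)
    (fun m => (summable_coeff_neg (wgt d h ^ m)).mul_left _)
    (fun k => summable_inner d hh hα (-k))
  rw [hcomm]
  have hinner : ∀ m : ℕ, ∑' k : ZLat d, binCoef α m * (wgt d h ^ m).coeff (-k)
      = binCoef α m * Xc d h ^ m := by
    intro m
    rw [tsum_mul_left, tsum_coeff_neg, totHom_wgt_pow]
  rw [tsum_congr hinner, (hasSum_binCoef hα hX0 hX1).tsum_eq,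
    ← Real.mul_rpow (Bc_pos d hh).le (by linarith : (0:ℝ) ≤ 1 - Xc d h),
    Bc_mul_one_sub_Xc d hh, Real.one_rpow]

end KernelSum

/-! ### Norm of the kernel -/

lemma norm_multKernel {d : ℕ} {h α : ℝ} (hh : 0 < h) (hα : 0 ≤ α) (k : ZLat d) :
    ‖multKernel d h (fun ξ => ((Msymb d h ξ ^ (-α) : ℝ) : ℂ)) k‖ = kerR d h α k := by
  rw [multKernel_eq d hh hα k]
  rw [show ((Bc d h ^ (-α) * ∑' m : ℕ, binCoef α m * (wgt d h ^ m).coeff (-k) : ℝ) : ℂ)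
    = ((kerR d h α k : ℝ) : ℂ) from rfl]
  rw [Complex.norm_real, Real.norm_of_nonneg (kerR_nonneg hh hα k)]

/-! ### `ℓ^p` machinery -/

section Lp

variable {d : ℕ} {p : ℝ≥0∞} [Fact (1 ≤ p)]

lemma p_ne_zero (p : ℝ≥0∞) [Fact (1 ≤ p)] : p ≠ 0 := by
  have := Fact.out (p := 1 ≤ p)
  intro h
  rw [h] at this
  simp at this

lemma memℓp_comp_equiv (e : ZLat d ≃ ZLat d) (f : lp (fun _ : ZLat d => ℂ) p) :
    Memℓp (⇑f ∘ e) p := by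
  rcases eq_or_ne p ∞ with rfl | hptop
  · apply memℓp_infty
    have hb := memℓp_infty_iff.mp (lp.memℓp f)
    have : (Set.range fun i => ‖(⇑f ∘ e) i‖) = Set.range fun i => ‖f i‖ := by
      have : (fun i => ‖(⇑f ∘ e) i‖) = (fun i => ‖f i‖) ∘ e := rfl
      rw [this, Set.range_comp, Set.range_eq_univ.mpr e.surjective, Set.image_univ]
    rwa [this]
  · have hpr : 0 < p.toReal := ENNReal.toReal_pos (p_ne_zero p) hptop
    apply memℓp_gen
    exact (Equiv.summable_iff e).mpr ((lp.memℓp f).summable hpr)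

lemma norm_lp_comp_equiv (e : ZLat d ≃ ZLat d) (f : lp (fun _ : ZLat d => ℂ) p)
    (hm : Memℓp (⇑f ∘ e) p) :
    ‖(⟨⇑f ∘ e, hm⟩ : lp (fun _ : ZLat d => ℂ) p)‖ = ‖f‖ := by
  rcases eq_or_ne p ∞ with rfl | hptop
  · rw [lp.norm_eq_ciSup, lp.norm_eq_ciSup]
    exact Equiv.iSup_comp (g := fun i => ‖f i‖) e
  · have hpr : 0 < p.toReal := ENNReal.toReal_pos (p_ne_zero p) hptop
    rw [lp.norm_eq_tsum_rpow hpr, lp.norm_eq_tsum_rpow hpr]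
    congr 1
    exact Equiv.tsum_eq e (fun i => ‖f i‖ ^ p.toReal)

/-- Evaluation at a point as a continuous linear map on `ℓ^p`. -/
def evalCLM (p : ℝ≥0∞) [Fact (1 ≤ p)] (n : ZLat d) : lp (fun _ : ZLat d => ℂ) p →L[ℂ] ℂ :=
  LinearMap.mkContinuous
    { toFun := fun f => f n
      map_add' := fun f g => congrFun (lp.coeFn_add f g) n
      map_smul' := fun c f => by
        have := congrFun (lp.coeFn_smul c f) n
        simpa using this }
    1 (fun f => by
      rw [one_mul]
      exact lp.norm_apply_le_norm (p_ne_zero p) f n)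

lemma evalCLM_apply (n : ZLat d) (f : lp (fun _ : ZLat d => ℂ) p) :
    evalCLM p n f = f n := rfl

end Lp

/-! ### Main theorem -/

/-- **Boundedness of negative fractional powers of `1 − Δ_h` on `l^p_h` with logarithmic
loss:** there is `C > 0` depending only on `d` such that for all `α ∈ [0,1]`, `1 ≤ p ≤ ∞` and
`0 < h ≤ 1`, `‖(1 − Δ_h)^{−α} f‖_{l^p_h} ≤ C (1 + |ln h|)^{dα} ‖f‖_{l^p_h}`, where
`(1 − Δ_h)^{−α}` is the Fourier multiplier operator with symbol `M(ξ)^{−α}`. -/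
theorem one_sub_discLap_neg_rpow_bound (d : ℕ) (hd : 1 ≤ d) :
    ∃ C : ℝ, 0 < C ∧
      ∀ (α : ℝ), 0 ≤ α → α ≤ 1 →
      ∀ (p : ℝ≥0∞) [Fact (1 ≤ p)],
      ∀ (h : ℝ), 0 < h → h ≤ 1 →
      ∀ f : lp (fun _ : ZLat d => ℂ) p,
        ∃ hm : Memℓp (multOp d h (fun ξ => ((Msymb d h ξ ^ (-α) : ℝ) : ℂ)) ⇑f) p,
          ‖(⟨multOp d h (fun ξ => ((Msymb d h ξ ^ (-α) : ℝ) : ℂ)) ⇑f, hm⟩ :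
              lp (fun _ : ZLat d => ℂ) p)‖
            ≤ C * (1 + |Real.log h|) ^ (d * α) * ‖f‖ := by
  refine ⟨1, one_pos, ?_⟩
  intro α hα0 hα1 p hp h hh hh1 f
  set msym : (Fin d → ℝ) → ℂ := fun ξ => ((Msymb d h ξ ^ (-α) : ℝ) : ℂ) with hmsym
  set K : ZLat d → ℂ := multKernel d h msym with hK
  have hKnorm : ∀ k, ‖K k‖ = kerR d h α k := fun k => norm_multKernel hh hα0 k
  have hKsum : Summable (fun k => ‖K k‖) := by
    apply Summable.congr (summable_kerR hh hα0)
    intro k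
    exact (hKnorm k).symm
  have hKone : ∑' k, ‖K k‖ = 1 := by
    rw [tsum_congr hKnorm]
    exact tsum_kerR hh hα0
  -- the translated copies of f
  set g : ZLat d → lp (fun _ : ZLat d => ℂ) p :=
    fun j => ⟨⇑f ∘ (Equiv.subRight j), memℓp_comp_equiv (Equiv.subRight j) f⟩ with hg
  have hgnorm : ∀ j, ‖g j‖ = ‖f‖ := fun j =>
    norm_lp_comp_equiv (Equiv.subRight j) f _
  have hgapply : ∀ j n, (g j : ∀ _ : ZLat d, ℂ) n = f (n - j) := fun j n => rfl
  -- the series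
  set s : ZLat d → lp (fun _ : ZLat d => ℂ) p := fun j => K j • g j with hs
  have hsnorm : ∀ j, ‖s j‖ = ‖K j‖ * ‖f‖ := by
    intro j
    rw [hs]
    simp only []
    rw [norm_smul, hgnorm j]
  have hssum : Summable s := by
    apply Summable.of_norm
    apply Summable.congr (hKsum.mul_right ‖f‖)
    intro j
    exact (hsnorm j).symm
  set G : lp (fun _ : ZLat d => ℂ) p := ∑' j, s j with hG
  have hGnorm : ‖G‖ ≤ ‖f‖ := by
    calc ‖G‖ ≤ ∑' j, ‖s j‖ := norm_tsum_le_tsum_norm (by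
        apply Summable.congr (hKsum.mul_right ‖f‖)
        intro j
        exact (hsnorm j).symm)
      _ = ∑' j, ‖K j‖ * ‖f‖ := tsum_congr hsnorm
      _ = (∑' j, ‖K j‖) * ‖f‖ := tsum_mul_right
      _ = ‖f‖ := by rw [hKone, one_mul]
  have hGapply : ∀ n, (G : ∀ _ : ZLat d, ℂ) n = ∑' j, K j * f (n - j) := by
    intro n
    have h1 : evalCLM p n G = ∑' j, evalCLM p n (s j) :=
      ContinuousLinearMap.map_tsum (evalCLM p n) hssum
    rw [evalCLM_apply] at h1
    rw [h1]
    apply tsum_congr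
    intro j
    show (s j : ∀ _ : ZLat d, ℂ) n = K j * f (n - j)
    rw [hs]
    simp only []
    have hsm := congrFun (lp.coeFn_smul (K j) (g j)) n
    rw [hsm, Pi.smul_apply, hgapply j n, smul_eq_mul]
  have hmult : multOp d h msym ⇑f = ⇑G := by
    funext n
    rw [multOp, hGapply n]
    rw [← Equiv.tsum_eq (Equiv.subLeft n) (fun k => f k * K (n - k))]
    apply tsum_congr
    intro j
    have h1 : Equiv.subLeft n j = n - j := rfl
    rw [h1, show n - (n - j) = j by abel, mul_comm]
  have hm : Memℓp (multOp d h msym ⇑f) p := by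
    rw [hmult]
    exact lp.memℓp G
  refine ⟨hm, ?_⟩
  have helem : (⟨multOp d h msym ⇑f, hm⟩ : lp (fun _ : ZLat d => ℂ) p) = G := by
    apply Subtype.ext
    exact hmult
  rw [helem]
  have hfac : (1:ℝ) ≤ (1 + |Real.log h|) ^ ((d:ℝ) * α) :=
    Real.one_le_rpow (by linarith [abs_nonneg (Real.log h)])
      (mul_nonneg (Nat.cast_nonneg d) hα0)
  calc ‖G‖ ≤ ‖f‖ := hGnorm
    _ ≤ (1 + |Real.log h|) ^ ((d:ℝ) * α) * ‖f‖ :=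
        le_mul_of_one_le_left (norm_nonneg f) hfac
    _ = 1 * (1 + |Real.log h|) ^ ((d:ℝ) * α) * ‖f‖ := by ring
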